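/- Let X ∈ ℝ^{n₁×n₂×n₃}, and suppose for each mode i there exist an orthogonal projection Πᵢ and a bound εᵢ ≥ 0 with ‖(I - Πᵢ) X_{(i)}‖_F ≤ εᵢ, where X_{(i)} is the mode-i unfolding. Then ‖X - X ×₁ Π₁ ×₂ Π₂ ×₃ Π₃‖_F² ≤ ε₁² + ε₂² + ε₃². -/
import Mathlib


open Matrix

/-- Frobenius norm of a real matrix. -/
noncomputable def frobNorm {α β : Type*} [Fintype α] [Fintype β]
    (A : Matrix α β ℝ) : ℝ := Real.sqrt (∑ i, ∑ j, (A i j) ^ 2)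

/-- Squared Frobenius norm of a real matrix. -/
noncomputable def frobSq {α β : Type*} [Fintype α] [Fintype β]
    (A : Matrix α β ℝ) : ℝ := ∑ i, ∑ j, (A i j) ^ 2

/-- Spectral norm (largest singular value) of a real matrix: the operator norm
of the induced linear map between Euclidean spaces. -/
noncomputable def specNorm {α β : Type*} [Fintype α] [Fintype β] [DecidableEq α] [DecidableEq β]
    (A : Matrix α β ℝ) : ℝ :=
  ‖LinearMap.toContinuousLinearMap (Matrix.toEuclideanLin A)‖

/-- Moore–Penrose pseudoinverse of a full-column-rank matrix: `C⁺ = (CᵀC)⁻¹Cᵀ`. -/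
noncomputable def pinv {m k : ℕ} (C : Matrix (Fin m) (Fin k) ℝ) : Matrix (Fin k) (Fin m) ℝ :=
  (Cᵀ * C)⁻¹ * Cᵀ

/-- Mode-1 product of an order-3 tensor with a matrix. -/
def mode1 {n₁ n₂ n₃ m : ℕ} (U : Matrix (Fin m) (Fin n₁) ℝ)
    (X : Fin n₁ × Fin n₂ × Fin n₃ → ℝ) : Fin m × Fin n₂ × Fin n₃ → ℝ :=
  fun p => ∑ j, U p.1 j * X (j, p.2.1, p.2.2)

/-- Mode-2 product of an order-3 tensor with a matrix. -/
def mode2 {n₁ n₂ n₃ m : ℕ} (V : Matrix (Fin m) (Fin n₂) ℝ)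
    (X : Fin n₁ × Fin n₂ × Fin n₃ → ℝ) : Fin n₁ × Fin m × Fin n₃ → ℝ :=
  fun p => ∑ k, V p.2.1 k * X (p.1, k, p.2.2)

/-- Mode-3 product of an order-3 tensor with a matrix. -/
def mode3 {n₁ n₂ n₃ m : ℕ} (W : Matrix (Fin m) (Fin n₃) ℝ)
    (X : Fin n₁ × Fin n₂ × Fin n₃ → ℝ) : Fin n₁ × Fin n₂ × Fin m → ℝ :=
  fun p => ∑ l, W p.2.2 l * X (p.1, p.2.1, l)

/-- Mode-1 unfolding of an order-3 tensor. -/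
def unfold1 {n₁ n₂ n₃ : ℕ} (X : Fin n₁ × Fin n₂ × Fin n₃ → ℝ) :
    Matrix (Fin n₁) (Fin n₂ × Fin n₃) ℝ := Matrix.of fun j p => X (j, p.1, p.2)

/-- Mode-2 unfolding of an order-3 tensor. -/
def unfold2 {n₁ n₂ n₃ : ℕ} (X : Fin n₁ × Fin n₂ × Fin n₃ → ℝ) :
    Matrix (Fin n₂) (Fin n₁ × Fin n₃) ℝ := Matrix.of fun k p => X (p.1, k, p.2)

/-- Mode-3 unfolding of an order-3 tensor. -/
def unfold3 {n₁ n₂ n₃ : ℕ} (X : Fin n₁ × Fin n₂ × Fin n₃ → ℝ) :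
    Matrix (Fin n₃) (Fin n₁ × Fin n₂) ℝ := Matrix.of fun l p => X (p.1, p.2, l)

/-- Frobenius norm of an order-3 tensor. -/
noncomputable def tnorm {n₁ n₂ n₃ : ℕ} (X : Fin n₁ × Fin n₂ × Fin n₃ → ℝ) : ℝ :=
  Real.sqrt (∑ p, (X p) ^ 2)

/-- Squared Frobenius norm of an order-3 tensor. -/
noncomputable def tSq {n₁ n₂ n₃ : ℕ} (X : Fin n₁ × Fin n₂ × Fin n₃ → ℝ) : ℝ :=
  ∑ p, (X p) ^ 2


/-! ### Auxiliary machinery -/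

/-- Inner product of order-3 tensors. -/
noncomputable def tin {n₁ n₂ n₃ : ℕ} (A B : Fin n₁ × Fin n₂ × Fin n₃ → ℝ) : ℝ :=
  ∑ p, A p * B p

section auxLems
variable {n₁ n₂ n₃ : ℕ}

lemma trace_form {α β : Type*} [Fintype α] [Fintype β] [DecidableEq α]
    (A B : Matrix α β ℝ) : Matrix.trace (A * Bᵀ) = ∑ i, ∑ j, A i j * B i j := by
  simp [Matrix.trace, Matrix.mul_apply, Matrix.diag, Matrix.transpose_apply]

lemma unfold1_mode1 (U : Matrix (Fin n₁) (Fin n₁) ℝ) (X : Fin n₁ × Fin n₂ × Fin n₃ → ℝ) :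
    unfold1 (mode1 U X) = U * unfold1 X := by
  ext i q; simp [unfold1, mode1, Matrix.mul_apply]

lemma unfold2_mode2 (V : Matrix (Fin n₂) (Fin n₂) ℝ) (X : Fin n₁ × Fin n₂ × Fin n₃ → ℝ) :
    unfold2 (mode2 V X) = V * unfold2 X := by
  ext k q; simp [unfold2, mode2, Matrix.mul_apply]

lemma unfold3_mode3 (W : Matrix (Fin n₃) (Fin n₃) ℝ) (X : Fin n₁ × Fin n₂ × Fin n₃ → ℝ) :
    unfold3 (mode3 W X) = W * unfold3 X := by
  ext l q; simp [unfold3, mode3, Matrix.mul_apply]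

lemma tin_eq_trace1 (A B : Fin n₁ × Fin n₂ × Fin n₃ → ℝ) :
    tin A B = Matrix.trace (unfold1 A * (unfold1 B)ᵀ) := by
  rw [trace_form]
  simp [tin, unfold1, Fintype.sum_prod_type]

lemma tin_eq_trace2 (A B : Fin n₁ × Fin n₂ × Fin n₃ → ℝ) :
    tin A B = Matrix.trace (unfold2 A * (unfold2 B)ᵀ) := by
  rw [trace_form]
  simp only [tin, unfold2, Fintype.sum_prod_type, Matrix.of_apply]
  rw [Finset.sum_comm]

lemma tin_eq_trace3 (A B : Fin n₁ × Fin n₂ × Fin n₃ → ℝ) :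
    tin A B = Matrix.trace (unfold3 A * (unfold3 B)ᵀ) := by
  rw [trace_form]
  simp only [tin, unfold3, Fintype.sum_prod_type, Matrix.of_apply]
  exact (Finset.sum_congr rfl fun j _ => Finset.sum_comm).trans Finset.sum_comm

lemma tin_mode1 (U : Matrix (Fin n₁) (Fin n₁) ℝ) (Y Z : Fin n₁ × Fin n₂ × Fin n₃ → ℝ) :
    tin (mode1 U Y) Z = tin Y (mode1 Uᵀ Z) := by
  rw [tin_eq_trace1, tin_eq_trace1, unfold1_mode1, unfold1_mode1]
  rw [Matrix.mul_assoc, Matrix.trace_mul_comm, Matrix.transpose_mul, Matrix.transpose_transpose,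
    Matrix.mul_assoc]

lemma tin_mode2 (V : Matrix (Fin n₂) (Fin n₂) ℝ) (Y Z : Fin n₁ × Fin n₂ × Fin n₃ → ℝ) :
    tin (mode2 V Y) Z = tin Y (mode2 Vᵀ Z) := by
  rw [tin_eq_trace2, tin_eq_trace2, unfold2_mode2, unfold2_mode2]
  rw [Matrix.mul_assoc, Matrix.trace_mul_comm, Matrix.transpose_mul, Matrix.transpose_transpose,
    Matrix.mul_assoc]

lemma mode1_mul (U V : Matrix (Fin n₁) (Fin n₁) ℝ) (X : Fin n₁ × Fin n₂ × Fin n₃ → ℝ) :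
    mode1 U (mode1 V X) = mode1 (U * V) X := by
  funext p
  simp only [mode1, Matrix.mul_apply, Finset.mul_sum, Finset.sum_mul]
  rw [Finset.sum_comm]
  exact Finset.sum_congr rfl fun _ _ => Finset.sum_congr rfl fun _ _ => by ring

lemma mode2_mul (U V : Matrix (Fin n₂) (Fin n₂) ℝ) (X : Fin n₁ × Fin n₂ × Fin n₃ → ℝ) :
    mode2 U (mode2 V X) = mode2 (U * V) X := by
  funext p
  simp only [mode2, Matrix.mul_apply, Finset.mul_sum, Finset.sum_mul]
  rw [Finset.sum_comm]
  exact Finset.sum_congr rfl fun _ _ => Finset.sum_congr rfl fun _ _ => by ring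

lemma mode1_zero (X : Fin n₁ × Fin n₂ × Fin n₃ → ℝ) :
    mode1 (0 : Matrix (Fin n₁) (Fin n₁) ℝ) X = 0 := by
  funext p; simp [mode1]

lemma mode2_zero (X : Fin n₁ × Fin n₂ × Fin n₃ → ℝ) :
    mode2 (0 : Matrix (Fin n₂) (Fin n₂) ℝ) X = 0 := by
  funext p; simp [mode2]

lemma mode1_one_sub (P : Matrix (Fin n₁) (Fin n₁) ℝ) (X : Fin n₁ × Fin n₂ × Fin n₃ → ℝ) :
    mode1 (1 - P) X = X - mode1 P X := by
  funext p
  simp [mode1, sub_mul, Finset.sum_sub_distrib, Matrix.one_apply, Finset.sum_ite_eq,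
    Pi.sub_apply]

lemma mode2_one_sub (P : Matrix (Fin n₂) (Fin n₂) ℝ) (X : Fin n₁ × Fin n₂ × Fin n₃ → ℝ) :
    mode2 (1 - P) X = X - mode2 P X := by
  funext p
  simp [mode2, sub_mul, Finset.sum_sub_distrib, Matrix.one_apply, Finset.sum_ite_eq,
    Pi.sub_apply]

lemma mode3_one_sub (P : Matrix (Fin n₃) (Fin n₃) ℝ) (X : Fin n₁ × Fin n₂ × Fin n₃ → ℝ) :
    mode3 (1 - P) X = X - mode3 P X := by
  funext p
  simp [mode3, sub_mul, Finset.sum_sub_distrib, Matrix.one_apply, Finset.sum_ite_eq,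
    Pi.sub_apply]

lemma mode1_sub_right (U : Matrix (Fin n₁) (Fin n₁) ℝ) (X Y : Fin n₁ × Fin n₂ × Fin n₃ → ℝ) :
    mode1 U (X - Y) = mode1 U X - mode1 U Y := by
  funext p
  simp [mode1, mul_sub, Finset.sum_sub_distrib]

lemma mode2_sub_right (U : Matrix (Fin n₂) (Fin n₂) ℝ) (X Y : Fin n₁ × Fin n₂ × Fin n₃ → ℝ) :
    mode2 U (X - Y) = mode2 U X - mode2 U Y := by
  funext p
  simp [mode2, mul_sub, Finset.sum_sub_distrib]

lemma mode12_comm (U : Matrix (Fin n₁) (Fin n₁) ℝ) (V : Matrix (Fin n₂) (Fin n₂) ℝ)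
    (X : Fin n₁ × Fin n₂ × Fin n₃ → ℝ) : mode1 U (mode2 V X) = mode2 V (mode1 U X) := by
  funext p
  simp only [mode1, mode2, Finset.mul_sum]
  rw [Finset.sum_comm]
  exact Finset.sum_congr rfl fun _ _ => Finset.sum_congr rfl fun _ _ => by ring

lemma mode13_comm (U : Matrix (Fin n₁) (Fin n₁) ℝ) (W : Matrix (Fin n₃) (Fin n₃) ℝ)
    (X : Fin n₁ × Fin n₂ × Fin n₃ → ℝ) : mode1 U (mode3 W X) = mode3 W (mode1 U X) := by
  funext p
  simp only [mode1, mode3, Finset.mul_sum]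
  rw [Finset.sum_comm]
  exact Finset.sum_congr rfl fun _ _ => Finset.sum_congr rfl fun _ _ => by ring

lemma mode23_comm (V : Matrix (Fin n₂) (Fin n₂) ℝ) (W : Matrix (Fin n₃) (Fin n₃) ℝ)
    (X : Fin n₁ × Fin n₂ × Fin n₃ → ℝ) : mode2 V (mode3 W X) = mode3 W (mode2 V X) := by
  funext p
  simp only [mode2, mode3, Finset.mul_sum]
  rw [Finset.sum_comm]
  exact Finset.sum_congr rfl fun _ _ => Finset.sum_congr rfl fun _ _ => by ring

lemma tSq_eq_tin (A : Fin n₁ × Fin n₂ × Fin n₃ → ℝ) : tSq A = tin A A := by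
  simp [tSq, tin, sq]

lemma tSq_nonneg (A : Fin n₁ × Fin n₂ × Fin n₃ → ℝ) : 0 ≤ tSq A :=
  Finset.sum_nonneg fun p _ => sq_nonneg _

lemma tin_zero_right (A : Fin n₁ × Fin n₂ × Fin n₃ → ℝ) : tin A 0 = 0 := by
  simp [tin]

lemma tin_sub_right (A B C : Fin n₁ × Fin n₂ × Fin n₃ → ℝ) :
    tin A (B - C) = tin A B - tin A C := by
  simp [tin, mul_sub, Finset.sum_sub_distrib]

lemma tSq_add3 (A B C : Fin n₁ × Fin n₂ × Fin n₃ → ℝ) :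
    tSq (A + B + C) = tSq A + tSq B + tSq C + 2 * (tin A B + tin A C + tin B C) := by
  simp only [tSq, tin, Pi.add_apply, Finset.mul_sum, ← Finset.sum_add_distrib]
  exact Finset.sum_congr rfl fun p _ => by ring

/-- Key identity: for `Q` with `Qᵀ * Q = Q`, `‖mode1 Q Y‖² = ⟨Y, mode1 Q Y⟩`. -/
lemma tSq_mode1_proj {Q : Matrix (Fin n₁) (Fin n₁) ℝ} (hQ : Qᵀ * Q = Q)
    (Y : Fin n₁ × Fin n₂ × Fin n₃ → ℝ) : tSq (mode1 Q Y) = tin Y (mode1 Q Y) := by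
  rw [tSq_eq_tin, tin_mode1, mode1_mul, hQ]

lemma tSq_mode2_proj {Q : Matrix (Fin n₂) (Fin n₂) ℝ} (hQ : Qᵀ * Q = Q)
    (Y : Fin n₁ × Fin n₂ × Fin n₃ → ℝ) : tSq (mode2 Q Y) = tin Y (mode2 Q Y) := by
  rw [tSq_eq_tin, tin_mode2, mode2_mul, hQ]

lemma proj_compl_tsq {m : ℕ} {P : Matrix (Fin m) (Fin m) ℝ}
    (hsym : Pᵀ = P) (hidem : P * P = P) : (1 - P)ᵀ * (1 - P) = 1 - P := by
  rw [Matrix.transpose_sub, Matrix.transpose_one, hsym, Matrix.sub_mul, Matrix.one_mul,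
    Matrix.mul_sub, Matrix.mul_one, hidem]
  abel

lemma contract1 {P : Matrix (Fin n₁) (Fin n₁) ℝ} (hsym : Pᵀ = P) (hidem : P * P = P)
    (Y : Fin n₁ × Fin n₂ × Fin n₃ → ℝ) : tSq (mode1 P Y) ≤ tSq Y := by
  have hP : Pᵀ * P = P := by rw [hsym, hidem]
  have hQ := proj_compl_tsq hsym hidem
  have h1 := tSq_mode1_proj hP Y
  have h2 := tSq_mode1_proj hQ Y
  rw [mode1_one_sub, tin_sub_right, ← tSq_eq_tin] at h2
  have h3 := tSq_nonneg (mode1 (1 - P) Y)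
  rw [mode1_one_sub] at h3
  linarith

lemma contract2 {P : Matrix (Fin n₂) (Fin n₂) ℝ} (hsym : Pᵀ = P) (hidem : P * P = P)
    (Y : Fin n₁ × Fin n₂ × Fin n₃ → ℝ) : tSq (mode2 P Y) ≤ tSq Y := by
  have hP : Pᵀ * P = P := by rw [hsym, hidem]
  have hQ := proj_compl_tsq hsym hidem
  have h1 := tSq_mode2_proj hP Y
  have h2 := tSq_mode2_proj hQ Y
  rw [mode2_one_sub, tin_sub_right, ← tSq_eq_tin] at h2
  have h3 := tSq_nonneg (mode2 (1 - P) Y)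
  rw [mode2_one_sub] at h3
  linarith

lemma tSq_mode1_frob (U : Matrix (Fin n₁) (Fin n₁) ℝ) (X : Fin n₁ × Fin n₂ × Fin n₃ → ℝ) :
    tSq (mode1 U X) = frobSq (U * unfold1 X) := by
  simp only [tSq, frobSq, Fintype.sum_prod_type, mode1, unfold1, Matrix.mul_apply,
    Matrix.of_apply]

lemma tSq_mode2_frob (V : Matrix (Fin n₂) (Fin n₂) ℝ) (X : Fin n₁ × Fin n₂ × Fin n₃ → ℝ) :
    tSq (mode2 V X) = frobSq (V * unfold2 X) := by
  simp only [tSq, frobSq, Fintype.sum_prod_type, mode2, unfold2, Matrix.mul_apply,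
    Matrix.of_apply]
  rw [Finset.sum_comm]

lemma tSq_mode3_frob (W : Matrix (Fin n₃) (Fin n₃) ℝ) (X : Fin n₁ × Fin n₂ × Fin n₃ → ℝ) :
    tSq (mode3 W X) = frobSq (W * unfold3 X) := by
  simp only [tSq, frobSq, Fintype.sum_prod_type, mode3, unfold3, Matrix.mul_apply,
    Matrix.of_apply]
  exact (Finset.sum_congr rfl fun j _ => Finset.sum_comm).trans Finset.sum_comm

lemma frobSq_le_of_frobNorm_le {α β : Type*} [Fintype α] [Fintype β]
    {A : Matrix α β ℝ} {ε : ℝ} (hε : 0 ≤ ε) (h : frobNorm A ≤ ε) : frobSq A ≤ ε ^ 2 := by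
  have h0 : 0 ≤ frobSq A :=
    Finset.sum_nonneg fun i _ => Finset.sum_nonneg fun j _ => sq_nonneg _
  have hfn : frobNorm A = Real.sqrt (frobSq A) := rfl
  have : frobSq A = (frobNorm A) ^ 2 := by rw [hfn, Real.sq_sqrt h0]
  rw [this]
  exact pow_le_pow_left₀ (by rw [hfn]; exact Real.sqrt_nonneg _) h 2

end auxLems

theorem stmt11 {n₁ n₂ n₃ : ℕ} (X : Fin n₁ × Fin n₂ × Fin n₃ → ℝ)
    (Pi1 : Matrix (Fin n₁) (Fin n₁) ℝ) (Pi2 : Matrix (Fin n₂) (Fin n₂) ℝ)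
    (Pi3 : Matrix (Fin n₃) (Fin n₃) ℝ)
    (h1idem : Pi1 * Pi1 = Pi1) (h1sym : Pi1ᵀ = Pi1)
    (h2idem : Pi2 * Pi2 = Pi2) (h2sym : Pi2ᵀ = Pi2)
    (h3idem : Pi3 * Pi3 = Pi3) (h3sym : Pi3ᵀ = Pi3)
    (ε₁ ε₂ ε₃ : ℝ) (hε₁ : 0 ≤ ε₁) (hε₂ : 0 ≤ ε₂) (hε₃ : 0 ≤ ε₃)
    (hb₁ : frobNorm ((1 - Pi1) * unfold1 X) ≤ ε₁)
    (hb₂ : frobNorm ((1 - Pi2) * unfold2 X) ≤ ε₂)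
    (hb₃ : frobNorm ((1 - Pi3) * unfold3 X) ≤ ε₃) :
    tSq (X - mode3 Pi3 (mode2 Pi2 (mode1 Pi1 X))) ≤ ε₁ ^ 2 + ε₂ ^ 2 + ε₃ ^ 2 := by
  have hP1 : Pi1ᵀ * Pi1 = Pi1 := by rw [h1sym, h1idem]
  have hz1 : (1 - Pi1)ᵀ * Pi1 = 0 := by
    rw [Matrix.transpose_sub, Matrix.transpose_one, h1sym, Matrix.sub_mul, Matrix.one_mul,
      h1idem, sub_self]
  have hz2 : (1 - Pi2)ᵀ * Pi2 = 0 := by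
    rw [Matrix.transpose_sub, Matrix.transpose_one, h2sym, Matrix.sub_mul, Matrix.one_mul,
      h2idem, sub_self]
  have hcomm : mode3 Pi3 (mode2 Pi2 (mode1 Pi1 X)) = mode1 Pi1 (mode2 Pi2 (mode3 Pi3 X)) := by
    rw [← mode12_comm, ← mode13_comm, ← mode23_comm]
  have hsplit : X - mode3 Pi3 (mode2 Pi2 (mode1 Pi1 X)) =
      mode1 (1 - Pi1) X + mode1 Pi1 (mode2 (1 - Pi2) X)
        + mode1 Pi1 (mode2 Pi2 (mode3 (1 - Pi3) X)) := by
    rw [hcomm, mode1_one_sub, mode2_one_sub, mode3_one_sub]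
    simp only [mode1_sub_right, mode2_sub_right]
    abel
  have hcross1 : ∀ Z : Fin n₁ × Fin n₂ × Fin n₃ → ℝ,
      tin (mode1 (1 - Pi1) X) (mode1 Pi1 Z) = 0 := by
    intro Z
    rw [tin_mode1, mode1_mul, hz1, mode1_zero, tin_zero_right]
  have c12 := hcross1 (mode2 (1 - Pi2) X)
  have c13 := hcross1 (mode2 Pi2 (mode3 (1 - Pi3) X))
  have c23 : tin (mode1 Pi1 (mode2 (1 - Pi2) X))
      (mode1 Pi1 (mode2 Pi2 (mode3 (1 - Pi3) X))) = 0 := by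
    rw [tin_mode1, mode1_mul, hP1, mode12_comm, tin_mode2, mode2_mul, hz2, mode2_zero,
      tin_zero_right]
  have b1 : tSq (mode1 (1 - Pi1) X) ≤ ε₁ ^ 2 := by
    rw [tSq_mode1_frob]
    exact frobSq_le_of_frobNorm_le hε₁ hb₁
  have b2 : tSq (mode1 Pi1 (mode2 (1 - Pi2) X)) ≤ ε₂ ^ 2 := by
    refine le_trans (contract1 h1sym h1idem _) ?_
    rw [tSq_mode2_frob]
    exact frobSq_le_of_frobNorm_le hε₂ hb₂
  have b3 : tSq (mode1 Pi1 (mode2 Pi2 (mode3 (1 - Pi3) X))) ≤ ε₃ ^ 2 := by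
    refine le_trans (contract1 h1sym h1idem _) (le_trans (contract2 h2sym h2idem _) ?_)
    rw [tSq_mode3_frob]
    exact frobSq_le_of_frobNorm_le hε₃ hb₃
  rw [hsplit, tSq_add3, c12, c13, c23]
  linarith
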